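/- arXiv:2404.09536 — 4 statements merged into one kernel-verified Lean document; each statement's English description precedes it below -/
import Mathlib

section
/- The probability that a real node N_i receives the entire model of another real node N_j in a given round, namely P = (1 - (1 - r/(nk-1))^k)^k, is a decreasing function of the number of virtual nodes k: for every k ≥ 1, (1 - (1 - r/(n(k+1)-1))^(k+1))^(k+1) ≤ (1 - (1 - r/(nk-1))^k)^k. -/
/-- The probability `P = (1 - (1 - r/(n*k-1))^k)^k` that a real node receives the
entire model of another real node is decreasing in the number `k` of virtual nodes:
for every `k ≥ 1`,
`(1 - (1 - r/(n*(k+1)-1))^(k+1))^(k+1) ≤ (1 - (1 - r/(n*k-1))^k)^k`.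
Here `n > 1` (number of real nodes) and `1 ≤ r ≤ n*k - 2` (degree). -/
theorem stmt_2 (n r : ℝ) (hn : 1 < n) (hr : 1 ≤ r) :
    ∀ k : ℕ, 1 ≤ k → r ≤ n * k - 2 →
      (1 - (1 - r / (n * (k + 1 : ℕ) - 1)) ^ ((k : ℕ) + 1)) ^ ((k : ℕ) + 1) ≤
        (1 - (1 - r / (n * k - 1)) ^ k) ^ k := by
  intro k hk hrk
  have hk1 : (1:ℝ) ≤ (k:ℝ) := by exact_mod_cast hk
  push_cast
  set m : ℝ := (k:ℝ) with hm
  have hd1 : (0:ℝ) < n * m - 1 := by nlinarith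
  have hd2 : (0:ℝ) < n * (m + 1) - 1 := by nlinarith
  set A : ℝ := 1 - r / (n * m - 1) with hA
  set B : ℝ := 1 - r / (n * (m + 1) - 1) with hB
  have hApos : 0 < A := by
    rw [hA, sub_pos, div_lt_one hd1]; nlinarith
  have hAlt : A < 1 := by
    have : 0 < r / (n * m - 1) := div_pos (by linarith) hd1
    rw [hA]; linarith
  have hBlt : B < 1 := by
    have : 0 < r / (n * (m + 1) - 1) := div_pos (by linarith) hd2
    rw [hB]; linarith
  have hstep : m * A + 1 ≤ (m + 1) * B := by
    have h1 : (m + 1) * (r / (n * (m + 1) - 1)) ≤ m * (r / (n * m - 1)) := by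
      rw [← mul_div_assoc, ← mul_div_assoc, div_le_div_iff₀ hd2 hd1]
      nlinarith
    rw [hA, hB]; nlinarith
  have hm1 : (0:ℝ) < m + 1 := by linarith
  have hCpos : 0 < (m * A + 1) / (m + 1) := by positivity
  -- Bernoulli step
  set t : ℝ := (1 - A) / ((m + 1) * A) with ht
  have htpos : 0 ≤ t := by
    apply div_nonneg (by linarith) (by positivity)
  have hbern : 1 + ((k:ℕ) + 1 : ℕ) * t ≤ (1 + t) ^ (k + 1) :=
    one_add_mul_le_pow (by linarith) (k + 1)
  have hAne : A ≠ 0 := ne_of_gt hApos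
  have hsum : 1 + ((k:ℕ) + 1 : ℕ) * t = 1 / A := by
    have hcast : (((k:ℕ) + 1 : ℕ) : ℝ) = m + 1 := by push_cast [hm]; ring
    rw [hcast, ht]
    field_simp
    ring
  have hC : (m * A + 1) / (m + 1) = A * (1 + t) := by
    rw [ht]; field_simp; ring
  have h2 : A ^ k ≤ ((m * A + 1) / (m + 1)) ^ (k + 1) := by
    rw [hC, mul_pow]
    calc A ^ k = A ^ (k + 1) * (1 / A) := by
              rw [pow_succ]; field_simp
      _ ≤ A ^ (k + 1) * (1 + t) ^ (k + 1) := by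
          apply mul_le_mul_of_nonneg_left _ (by positivity)
          rw [← hsum]; exact hbern
  have hCB : (m * A + 1) / (m + 1) ≤ B := by
    rw [div_le_iff₀ hm1]; nlinarith
  have key : A ^ k ≤ B ^ (k + 1) :=
    h2.trans (pow_le_pow_left₀ (le_of_lt hCpos) hCB (k + 1))
  have hBpos : 0 < B := lt_of_lt_of_le hCpos hCB
  have hX0 : 0 ≤ 1 - A ^ k := by
    have : A ^ k ≤ 1 := pow_le_one₀ (le_of_lt hApos) (le_of_lt hAlt)
    linarith
  have hX1 : 1 - A ^ k ≤ 1 := by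
    have : 0 ≤ A ^ k := by positivity
    linarith
  have hY0 : 0 ≤ 1 - B ^ (k + 1) := by
    have : B ^ (k + 1) ≤ 1 := pow_le_one₀ (le_of_lt hBpos) (le_of_lt hBlt)
    linarith
  calc (1 - B ^ (k + 1)) ^ (k + 1)
      ≤ (1 - A ^ k) ^ (k + 1) := pow_le_pow_left₀ hY0 (by linarith) (k + 1)
    _ ≤ (1 - A ^ k) ^ k := pow_le_pow_of_le_one hX0 hX1 (Nat.le_succ k)
end

section
/- The expected number of model parameters of node N_j received by node N_i in a round equals d·(1 - (1 - r/(nk-1))^k), and this quantity is a decreasing function of k (for fixed n, d, r). Equivalently, the expected number of parameters NOT received, d·(1 - r/(nk-1))^k, is increasing in k. -/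
/-- AM-GM key step: `a^k ≤ ((k*a+1)/(k+1))^(k+1)` for `a ≥ 0`. -/
lemma amgm_key (a : ℝ) (k : ℕ) (ha : 0 ≤ a) :
    a ^ k ≤ ((k * a + 1) / (k + 1)) ^ (k + 1) := by
  have hk1 : (0:ℝ) < (k:ℝ) + 1 := by positivity
  have hw : (k:ℝ)/(k+1) + 1/(k+1) = 1 := by field_simp
  have h := Real.geom_mean_le_arith_mean2_weighted
    (by positivity : (0:ℝ) ≤ (k:ℝ)/(k+1)) (by positivity : (0:ℝ) ≤ 1/((k:ℝ)+1))
    ha (zero_le_one) hw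
  have h' : a ^ ((k:ℝ)/(k+1)) ≤ (k * a + 1) / (k + 1) := by
    calc a ^ ((k:ℝ)/(k+1)) = a ^ ((k:ℝ)/(k+1)) * 1 ^ (1/((k:ℝ)+1)) := by
          rw [Real.one_rpow, mul_one]
      _ ≤ (k:ℝ)/(k+1) * a + 1/((k:ℝ)+1) * 1 := h
      _ = (k * a + 1) / (k + 1) := by ring
  have hm : (0:ℝ) ≤ (k * a + 1) / (k + 1) := by positivity
  have := Real.rpow_le_rpow (Real.rpow_nonneg ha _) h' (by positivity : (0:ℝ) ≤ (k:ℝ)+1)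
  have e1 : (a ^ ((k:ℝ)/(k+1))) ^ ((k:ℝ)+1) = a ^ k := by
    rw [← Real.rpow_mul ha, div_mul_cancel₀ _ (ne_of_gt hk1), Real.rpow_natCast]
  have e2 : ((k * a + 1) / (k + 1)) ^ ((k:ℝ)+1) = ((k * a + 1) / (k + 1)) ^ (k+1) := by
    have hc : ((k:ℝ)+1) = ((k+1:ℕ):ℝ) := by push_cast; ring
    rw [hc, Real.rpow_natCast]
  rw [e1, e2] at this
  exact this

/-- The expected number of model parameters of `N_j` received by `N_i` in a round,
`d * (1 - (1 - r/(n*k-1))^k)`, is a decreasing function of `k` (for fixed `n`, `d`, `r`);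
equivalently, the expected number of parameters NOT received, `d * (1 - r/(n*k-1))^k`,
is increasing in `k`. Here `d > 0`, `n > 1`, `1 ≤ r ≤ n*k - 2`. -/
theorem stmt_3 (n r d : ℝ) (hn : 1 < n) (hr : 1 ≤ r) (hd : 0 < d) :
    ∀ k : ℕ, 1 ≤ k → r ≤ n * k - 2 →
      (d * (1 - (1 - r / (n * (k + 1 : ℕ) - 1)) ^ ((k : ℕ) + 1)) ≤
        d * (1 - (1 - r / (n * k - 1)) ^ k)) ∧
      (d * (1 - r / (n * k - 1)) ^ k ≤
        d * (1 - r / (n * (k + 1 : ℕ) - 1)) ^ ((k : ℕ) + 1)) := by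
  intro k hk hrk
  have hk1 : (1:ℝ) ≤ (k:ℝ) := by exact_mod_cast hk
  have hd1 : (0:ℝ) < n * k - 1 := by nlinarith
  have hd2 : (0:ℝ) < n * ((k:ℕ)+1 : ℕ) - 1 := by push_cast; nlinarith
  set a : ℝ := 1 - r / (n * k - 1) with ha_def
  set b : ℝ := 1 - r / (n * ((k:ℕ)+1 : ℕ) - 1) with hb_def
  have ha : 0 ≤ a := by
    rw [ha_def, sub_nonneg, div_le_one hd1]; linarith
  have hm_le_b : (k * a + 1) / (k + 1) ≤ b := by
    rw [ha_def, hb_def, div_le_iff₀ (by positivity : (0:ℝ) < (k:ℝ)+1)]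
    push_cast
    have h2 : (0:ℝ) < n * ((k:ℝ)+1) - 1 := by nlinarith
    have hrpos : (0:ℝ) < r := lt_of_lt_of_le one_pos hr
    have key : r * ((k:ℝ)+1) / (n * ((k:ℝ)+1) - 1) ≤ (k:ℝ) * r / (n * (k:ℝ) - 1) := by
      rw [div_le_div_iff₀ h2 hd1]
      nlinarith
    ring_nf at key ⊢
    linarith
  have hb : 0 ≤ b := le_trans (by positivity) hm_le_b
  have key : a ^ k ≤ b ^ (k + 1) :=
    (amgm_key a k ha).trans (pow_le_pow_left₀ (by positivity) hm_le_b _)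
  constructor
  · have : 1 - b ^ (k+1) ≤ 1 - a ^ k := by linarith
    exact mul_le_mul_of_nonneg_left this hd.le
  · exact mul_le_mul_of_nonneg_left key hd.le
end

section
/- In a uniformly random r-regular graph on m vertices, for four distinct vertices v, w, v', w', the conditional probability P[{v,w} ∈ E | {v',w'} ∈ E] = (r - 2·(r-1)/(m-2)) / (m-3). -/
open SimpleGraph Finset

namespace Stmt7Aux

variable {m r : ℕ}

/-- Regularity predicate. -/
abbrev Reg (r : ℕ) (G : SimpleGraph (Fin m)) : Prop := ∀ x, (G.neighborSet x).ncard = r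

lemma ncard_preimage_equiv {α β : Type*} (e : α ≃ β) (s : Set β) : (e ⁻¹' s).ncard = s.ncard :=
  Set.ncard_preimage_of_injective_subset_range e.injective
    (by rw [Set.range_eq_univ.mpr e.surjective]; exact Set.subset_univ s)

lemma neighborSet_comap {α β : Type*} (e : α ≃ β) (G : SimpleGraph β) (x : α) :
    (G.comap e).neighborSet x = e ⁻¹' (G.neighborSet (e x)) := by
  ext y; simp [SimpleGraph.comap]

lemma ncard_neighborSet_comap {α β : Type*} (e : α ≃ β) (G : SimpleGraph β) (x : α) :
    ((G.comap e).neighborSet x).ncard = (G.neighborSet (e x)).ncard := by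
  rw [neighborSet_comap, ncard_preimage_equiv]

lemma reg_comap (σ : Equiv.Perm (Fin m)) (G : SimpleGraph (Fin m)) :
    Reg r (G.comap σ) ↔ Reg r G := by
  constructor
  · intro h x
    have := h (σ.symm x)
    rwa [ncard_neighborSet_comap, Equiv.apply_symm_apply] at this
  · intro h x
    rw [ncard_neighborSet_comap]; exact h _

/-- Relabelling graphs by a permutation is an equivalence. -/
def comapEquiv (σ : Equiv.Perm (Fin m)) : SimpleGraph (Fin m) ≃ SimpleGraph (Fin m) := by
  refine ⟨fun G => G.comap σ, fun G => G.comap σ.symm, fun G => ?_, fun G => ?_⟩ <;>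
  · ext x y; simp [SimpleGraph.comap]

lemma card_congr_perm (σ : Equiv.Perm (Fin m)) (P Q : SimpleGraph (Fin m) → Prop)
    (h : ∀ G, P G ↔ Q (G.comap σ)) :
    Nat.card {G // P G} = Nat.card {G // Q G} := by
  exact Nat.card_congr (Equiv.subtypeEquiv (comapEquiv σ) h)

/-- Main relabelling lemma for double-edge conditions. -/
lemma cardAB (σ : Equiv.Perm (Fin m)) (a b c d : Fin m) :
    Nat.card {G : SimpleGraph (Fin m) // Reg r G ∧ G.Adj (σ a) (σ b) ∧ G.Adj (σ c) (σ d)}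
      = Nat.card {G : SimpleGraph (Fin m) // Reg r G ∧ G.Adj a b ∧ G.Adj c d} := by
  refine card_congr_perm σ _ _ (fun G => ?_)
  rw [reg_comap]
  rfl

lemma cardA (σ : Equiv.Perm (Fin m)) (a b : Fin m) :
    Nat.card {G : SimpleGraph (Fin m) // Reg r G ∧ G.Adj (σ a) (σ b)}
      = Nat.card {G : SimpleGraph (Fin m) // Reg r G ∧ G.Adj a b} := by
  refine card_congr_perm σ _ _ (fun G => ?_)
  rw [reg_comap]
  rfl

end Stmt7Aux

namespace Stmt7Aux

open Classical in
lemma sum_deg (v' w' u : Fin m) :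
    ∑ x ∈ univ.erase u,
      (univ.filter (fun G : SimpleGraph (Fin m) => Reg r G ∧ G.Adj v' w' ∧ G.Adj u x)).card
    = r * (univ.filter (fun G : SimpleGraph (Fin m) => Reg r G ∧ G.Adj v' w')).card := by
  classical
  set S := univ.filter (fun G : SimpleGraph (Fin m) => Reg r G ∧ G.Adj v' w') with hS
  have h1 : ∀ x, univ.filter (fun G : SimpleGraph (Fin m) => Reg r G ∧ G.Adj v' w' ∧ G.Adj u x)
      = S.filter (fun G => G.Adj u x) := by
    intro x
    rw [hS, filter_filter]
    apply filter_congr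
    intro G _
    simp [and_assoc]
  calc ∑ x ∈ univ.erase u,
      (univ.filter (fun G : SimpleGraph (Fin m) => Reg r G ∧ G.Adj v' w' ∧ G.Adj u x)).card
      = ∑ x ∈ univ.erase u, ∑ G ∈ S, if G.Adj u x then 1 else 0 := by
        refine Finset.sum_congr rfl (fun x _ => ?_); rw [h1, card_filter]
    _ = ∑ G ∈ S, ∑ x ∈ univ.erase u, if G.Adj u x then 1 else 0 := Finset.sum_comm
    _ = ∑ G ∈ S, ((univ.erase u).filter (fun x => G.Adj u x)).card := by
        refine Finset.sum_congr rfl (fun G _ => ?_); rw [card_filter]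
    _ = ∑ _G ∈ S, r := by
        refine Finset.sum_congr rfl (fun G hG => ?_)
        have hreg : Reg r G := (mem_filter.mp hG).2.1
        have h2 : (univ.erase u).filter (fun x => G.Adj u x) = G.neighborFinset u := by
          ext x
          simp only [mem_filter, mem_erase, mem_univ, true_and, mem_neighborFinset,
            and_true]
          exact ⟨fun h => h.2, fun h => ⟨h.ne', h⟩⟩
        rw [h2]
        have := hreg u
        rwa [Set.ncard_eq_toFinset_card' , ← neighborFinset_def] at this
    _ = r * S.card := by rw [Finset.sum_const, smul_eq_mul, mul_comm]

end Stmt7Aux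

namespace Stmt7Aux

/-- Connection set (as naturals) for the circulant construction. -/
def T (m r : ℕ) : Finset ℕ :=
  (Icc 1 (r/2) ∪ Icc (m - r/2) (m - 1)) ∪ (if r % 2 = 1 then {m/2} else ∅)

section Tlemmas
variable (hm : 4 ≤ m) (hr1 : 1 ≤ r) (hr2 : r ≤ m - 1) (hodd : r % 2 = 1 → m % 2 = 0)
include hm hr1 hr2 hodd

lemma mem_T_bounds {j : ℕ} (hj : j ∈ T m r) : 1 ≤ j ∧ j ≤ m - 1 := by
  have hk : 2 * (r / 2) ≤ r := by omega
  simp only [T, mem_union, mem_Icc] at hj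
  rcases hj with (h | h) | h
  · omega
  · omega
  · split_ifs at h with hpar
    · simp only [mem_singleton] at h
      have := hodd hpar
      omega
    · simp at h

lemma T_card : (T m r).card = r := by
  have hk : 2 * (r / 2) ≤ r := by omega
  have hdisj : Disjoint (Icc 1 (r/2)) (Icc (m - r/2) (m - 1)) := by
    rw [Finset.disjoint_left]
    intro a ha hb
    simp only [mem_Icc] at ha hb
    omega
  have hcard1 : (Icc 1 (r/2) ∪ Icc (m - r/2) (m - 1)).card = 2 * (r / 2) := by
    rw [Finset.card_union_of_disjoint hdisj, Nat.card_Icc, Nat.card_Icc]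
    omega
  rcases Nat.even_or_odd r with hpar | hpar
  · have : r % 2 = 0 := Nat.even_iff.mp hpar
    simp only [T]
    rw [if_neg (by omega), union_empty, hcard1]
    omega
  · have hp : r % 2 = 1 := Nat.odd_iff.mp hpar
    have hme := hodd hp
    have hnot : m / 2 ∉ Icc 1 (r/2) ∪ Icc (m - r/2) (m - 1) := by
      simp only [mem_union, mem_Icc]
      omega
    simp only [T]
    rw [if_pos hp, Finset.union_comm _ {m/2}, Finset.card_union_of_disjoint (by
      simpa [Finset.disjoint_left] using hnot), hcard1, card_singleton]
    omega

lemma T_closed {j : ℕ} (hj : j ∈ T m r) : m - j ∈ T m r := by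
  have hk : 2 * (r / 2) ≤ r := by omega
  simp only [T, mem_union, mem_Icc] at hj ⊢
  rcases hj with (h | h) | h
  · left; right; omega
  · left; left; omega
  · split_ifs at h ⊢ with hpar
    · simp only [mem_singleton] at h ⊢
      have := hodd hpar
      omega
    · simp at h

end Tlemmas

lemma exists_reg (hm : 4 ≤ m) (hr1 : 1 ≤ r) (hr2 : r ≤ m - 1) (heven : Even (r * m)) :
    ∃ G : SimpleGraph (Fin m), Reg r G := by
  classical
  haveI : NeZero m := ⟨by omega⟩
  have hodd : r % 2 = 1 → m % 2 = 0 := by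
    intro hp
    rcases Nat.even_mul.mp heven with h | h
    · have := Nat.even_iff.mp h; omega
    · exact Nat.even_iff.mp h
  set S : Finset (ZMod m) := (T m r).image (Nat.cast) with hSdef
  -- cast is injective on T
  have hval : ∀ j ∈ T m r, (ZMod.val ((j : ℕ) : ZMod m)) = j := by
    intro j hj
    have := mem_T_bounds hm hr1 hr2 hodd hj
    exact ZMod.val_natCast_of_lt (by omega)
  have hScard : S.card = r := by
    rw [hSdef, Finset.card_image_of_injOn, T_card hm hr1 hr2 hodd]
    intro a ha b hb hab
    have : ZMod.val ((a : ℕ) : ZMod m) = ZMod.val ((b : ℕ) : ZMod m) := by rw [hab]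
    rwa [hval a ha, hval b hb] at this
  have hS0 : (0 : ZMod m) ∉ S := by
    rw [hSdef]
    simp only [Finset.mem_image, not_exists]
    rintro j ⟨hj, hj0⟩
    have h1 := hval j hj
    have h2 := mem_T_bounds hm hr1 hr2 hodd hj
    rw [hj0, ZMod.val_zero] at h1
    omega
  have hSneg : ∀ s ∈ S, -s ∈ S := by
    intro s hs
    rw [hSdef, Finset.mem_image] at hs ⊢
    obtain ⟨j, hj, rfl⟩ := hs
    refine ⟨m - j, T_closed hm hr1 hr2 hodd hj, ?_⟩
    have hb := mem_T_bounds hm hr1 hr2 hodd hj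
    have hjm : j ≤ m := by omega
    push_cast [Nat.cast_sub hjm]
    simp [ZMod.natCast_self]
  -- the circulant graph
  set G0 : SimpleGraph (ZMod m) :=
    { Adj := fun x y => x ≠ y ∧ x - y ∈ S
      symm := by
        constructor
        rintro x y ⟨h1, h2⟩
        refine ⟨h1.symm, ?_⟩
        have := hSneg _ h2
        rwa [neg_sub] at this
      loopless := ⟨fun x h => h.1 rfl⟩ } with hG0
  have hnbr : ∀ x : ZMod m, G0.neighborSet x = (fun s => x - s) '' (S : Set (ZMod m)) := by
    intro x
    ext y
    simp only [mem_neighborSet, Set.mem_image, Finset.mem_coe, hG0]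
    constructor
    · rintro ⟨h1, h2⟩
      exact ⟨x - y, h2, by rw [sub_sub_cancel]⟩
    · rintro ⟨s, hs, rfl⟩
      refine ⟨?_, by rwa [sub_sub_cancel]⟩
      intro h
      apply hS0
      have : s = 0 := by
        have := sub_eq_self.mp h.symm
        exact this
      rwa [← this]
  have hreg0 : ∀ x : ZMod m, (G0.neighborSet x).ncard = r := by
    intro x
    rw [hnbr x, Set.ncard_image_of_injective _ (fun a b h => by
      exact sub_right_injective h), Set.ncard_coe_finset, hScard]
  -- transfer to Fin m
  have e : Fin m ≃ ZMod m := by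
    refine ⟨fun i => ((i : ℕ) : ZMod m), fun z => ⟨z.val, ZMod.val_lt z⟩, fun i => ?_, fun z => ?_⟩
    · ext
      simp [ZMod.val_natCast_of_lt i.isLt]
    · simp [ZMod.natCast_rightInverse z]
  refine ⟨G0.comap e, fun x => ?_⟩
  rw [ncard_neighborSet_comap e]
  exact hreg0 _

end Stmt7Aux

namespace Stmt7Aux

lemma exists_reg_adj (hm : 4 ≤ m) (hr1 : 1 ≤ r) (hr2 : r ≤ m - 1) (heven : Even (r * m))
    (v' w' : Fin m) (h6 : v' ≠ w') :
    ∃ G : SimpleGraph (Fin m), Reg r G ∧ G.Adj v' w' := by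
  obtain ⟨G, hG⟩ := exists_reg hm hr1 hr2 heven
  have hne : (G.neighborSet v').Nonempty := by
    apply Set.nonempty_of_ncard_ne_zero
    rw [hG]
    omega
  obtain ⟨u, hu⟩ := hne
  have hu' : G.Adj v' u := hu
  set σ := Equiv.swap w' u with hσ
  refine ⟨G.comap σ, (reg_comap σ G).mpr hG, ?_⟩
  show G.Adj (σ v') (σ w')
  have hv' : σ v' = v' := Equiv.swap_apply_of_ne_of_ne h6 hu'.ne
  rw [hv', hσ, Equiv.swap_apply_left]
  exact hu'

lemma natcard_filter (p : SimpleGraph (Fin m) → Prop) [DecidablePred p] :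
    Nat.card {G // p G} = (univ.filter p).card := by
  rw [Nat.card_eq_fintype_card, Fintype.card_subtype]

end Stmt7Aux

set_option maxHeartbeats 2000000 in
open Stmt7Aux Finset Classical in
/-- In a uniformly random `r`-regular graph on `m` labeled vertices
(`m ≥ 4`, `1 ≤ r ≤ m-1`, `r*m` even), for four distinct vertices `v, w, v', w'`, the
conditional probability
`P[{v,w} ∈ E | {v',w'} ∈ E] = (r - 2·(r-1)/(m-2)) / (m-3)`,
expressed as a ratio of counts of `r`-regular graphs. -/
theorem stmt_7 (m r : ℕ) (hm : 4 ≤ m) (hr1 : 1 ≤ r) (hr2 : r ≤ m - 1)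
    (heven : Even (r * m)) (v w v' w' : Fin m)
    (h1 : v ≠ w) (h2 : v ≠ v') (h3 : v ≠ w') (h4 : w ≠ v') (h5 : w ≠ w') (h6 : v' ≠ w') :
    (Nat.card {G : SimpleGraph (Fin m) //
        (∀ x, (G.neighborSet x).ncard = r) ∧ G.Adj v' w' ∧ G.Adj v w} : ℝ) /
      (Nat.card {G : SimpleGraph (Fin m) //
        (∀ x, (G.neighborSet x).ncard = r) ∧ G.Adj v' w'} : ℝ) =
      ((r : ℝ) - 2 * ((r : ℝ) - 1) / ((m : ℝ) - 2)) / ((m : ℝ) - 3) := by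
  obtain ⟨N, hN⟩ : ∃ k, (univ.filter
    (fun G : SimpleGraph (Fin m) => Reg r G ∧ G.Adj v' w')).card = k := ⟨_, rfl⟩
  obtain ⟨A, hA⟩ : ∃ k, (univ.filter
    (fun G : SimpleGraph (Fin m) => Reg r G ∧ G.Adj v' w' ∧ G.Adj v' v)).card = k := ⟨_, rfl⟩
  obtain ⟨B, hB⟩ : ∃ k, (univ.filter
    (fun G : SimpleGraph (Fin m) => Reg r G ∧ G.Adj v' w' ∧ G.Adj v w)).card = k := ⟨_, rfl⟩
  -- relabelling invariance, specialized: permutations fixing v', w'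
  have key : ∀ (σ : Equiv.Perm (Fin m)) (c d : Fin m), σ v' = v' → σ w' = w' →
      (univ.filter
        (fun G : SimpleGraph (Fin m) => Reg r G ∧ G.Adj v' w' ∧ G.Adj (σ c) (σ d))).card
      = (univ.filter
        (fun G : SimpleGraph (Fin m) => Reg r G ∧ G.Adj v' w' ∧ G.Adj c d)).card := by
    intro σ c d hv'1 hw'1
    rw [← natcard_filter, ← natcard_filter]
    have h := cardAB (r := r) σ v' w' c d
    rwa [hv'1, hw'1] at h
  -- relabelling invariance for permutations exchanging v', w'
  have key2 : ∀ (σ : Equiv.Perm (Fin m)) (c d : Fin m), σ v' = w' → σ w' = v' →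
      (univ.filter
        (fun G : SimpleGraph (Fin m) => Reg r G ∧ G.Adj v' w' ∧ G.Adj (σ c) (σ d))).card
      = (univ.filter
        (fun G : SimpleGraph (Fin m) => Reg r G ∧ G.Adj v' w' ∧ G.Adj c d)).card := by
    intro σ c d hv1 hw1
    rw [← natcard_filter, ← natcard_filter]
    have h := cardAB (r := r) σ w' v' c d
    rw [hw1, hv1] at h
    rw [h]
    refine Nat.card_congr (Equiv.subtypeEquiv (Equiv.refl _) (fun G => ?_))
    simp only [Equiv.refl_apply]
    constructor <;> rintro ⟨ha, hb, hc⟩ <;> exact ⟨ha, hb.symm, hc⟩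
  -- equation 1 : r * N = N + (m - 2) * A
  have E1 : r * N = N + (m - 2) * A := by
    have hs := sum_deg (r := r) v' w' v'
    rw [← Finset.add_sum_erase _ _ (show w' ∈ univ.erase v' by simp [h6.symm])] at hs
    have t1 : (univ.filter
        (fun G : SimpleGraph (Fin m) => Reg r G ∧ G.Adj v' w' ∧ G.Adj v' w')).card = N := by
      rw [← hN]
      apply congrArg
      apply filter_congr
      intro G _
      tauto
    have t2 : ∀ x ∈ (univ.erase v').erase w', (univ.filter
        (fun G : SimpleGraph (Fin m) => Reg r G ∧ G.Adj v' w' ∧ G.Adj v' x)).card = A := by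
      intro x hx
      simp only [mem_erase, mem_univ, and_true] at hx
      have h := key (Equiv.swap x v) v' v
        (Equiv.swap_apply_of_ne_of_ne (Ne.symm hx.2) (Ne.symm h2))
        (Equiv.swap_apply_of_ne_of_ne (Ne.symm hx.1) (Ne.symm h3))
      rw [Equiv.swap_apply_of_ne_of_ne (Ne.symm hx.2) (Ne.symm h2),
        Equiv.swap_apply_right] at h
      exact h.trans hA
    rw [Finset.sum_congr rfl t2, Finset.sum_const, t1, smul_eq_mul, hN] at hs
    have hcard : ((univ.erase v').erase w').card = m - 2 := by
      rw [Finset.card_erase_of_mem (by simp [h6.symm]), Finset.card_erase_of_mem (by simp),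
        card_univ, Fintype.card_fin]
      omega
    rw [hcard] at hs
    omega
  -- equation 2 : r * N = 2 * A + (m - 3) * B
  have E2 : r * N = 2 * A + (m - 3) * B := by
    have hs := sum_deg (r := r) v' w' v
    rw [← Finset.add_sum_erase _ _ (show v' ∈ univ.erase v by simp [h2.symm]),
      ← Finset.add_sum_erase _ _
        (show w' ∈ (univ.erase v).erase v' by simp [h6.symm, h3.symm])] at hs
    have t1 : (univ.filter
        (fun G : SimpleGraph (Fin m) => Reg r G ∧ G.Adj v' w' ∧ G.Adj v v')).card = A := by
      rw [← hA]
      apply congrArg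
      apply filter_congr
      intro G _
      constructor <;> rintro ⟨ha, hb, hc⟩ <;> exact ⟨ha, hb, hc.symm⟩
    have t2 : (univ.filter
        (fun G : SimpleGraph (Fin m) => Reg r G ∧ G.Adj v' w' ∧ G.Adj v w')).card = A := by
      have h := key2 (Equiv.swap v' w') v v'
        (Equiv.swap_apply_left v' w') (Equiv.swap_apply_right v' w')
      rw [Equiv.swap_apply_of_ne_of_ne h2 h3, Equiv.swap_apply_left] at h
      rw [h]
      exact t1
    have t3 : ∀ x ∈ ((univ.erase v).erase v').erase w', (univ.filter
        (fun G : SimpleGraph (Fin m) => Reg r G ∧ G.Adj v' w' ∧ G.Adj v x)).card = B := by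
      intro x hx
      simp only [mem_erase, mem_univ, and_true] at hx
      have h := key (Equiv.swap x w) v w
        (Equiv.swap_apply_of_ne_of_ne (Ne.symm hx.2.1) (Ne.symm h4))
        (Equiv.swap_apply_of_ne_of_ne (Ne.symm hx.1) (Ne.symm h5))
      rw [Equiv.swap_apply_of_ne_of_ne (Ne.symm hx.2.2) h1,
        Equiv.swap_apply_right] at h
      exact h.trans hB
    rw [Finset.sum_congr rfl t3, Finset.sum_const, t1, t2, smul_eq_mul, hN] at hs
    have hcard : (((univ.erase v).erase v').erase w').card = m - 3 := by
      rw [Finset.card_erase_of_mem (by simp [h6.symm, h3.symm]),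
        Finset.card_erase_of_mem (by simp [h2.symm]), Finset.card_erase_of_mem (by simp),
        card_univ, Fintype.card_fin]
      omega
    rw [hcard] at hs
    omega
  -- positivity
  have hNpos : 0 < N := by
    obtain ⟨G, hG1, hG2⟩ := exists_reg_adj hm hr1 hr2 heven v' w' h6
    rw [← hN]
    exact Finset.card_pos.mpr ⟨G, by
      simp only [mem_filter, mem_univ, true_and]
      exact ⟨hG1, hG2⟩⟩
  -- rewrite the goal
  have hnum : (Nat.card {G : SimpleGraph (Fin m) //
      (∀ x, (G.neighborSet x).ncard = r) ∧ G.Adj v' w' ∧ G.Adj v w}) = B :=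
    (natcard_filter _).trans hB
  have hden : (Nat.card {G : SimpleGraph (Fin m) //
      (∀ x, (G.neighborSet x).ncard = r) ∧ G.Adj v' w'}) = N :=
    (natcard_filter _).trans hN
  rw [hnum, hden]
  -- real algebra
  obtain ⟨n, rfl⟩ : ∃ n, m = n + 4 := ⟨m - 4, by omega⟩
  rw [show n + 4 - 2 = n + 2 by omega] at E1
  rw [show n + 4 - 3 = n + 1 by omega] at E2
  have E1' : (r : ℝ) * N = N + ((n : ℝ) + 2) * A := by exact_mod_cast E1
  have E2' : (r : ℝ) * N = 2 * A + ((n : ℝ) + 1) * B := by exact_mod_cast E2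
  have hNne : (N : ℝ) ≠ 0 := by exact_mod_cast hNpos.ne'
  push_cast
  rw [show ((n : ℝ) + 4) - 2 = (n : ℝ) + 2 by ring, show ((n : ℝ) + 4) - 3 = (n : ℝ) + 1 by ring]
  have hn2 : ((n : ℝ) + 2) ≠ 0 := by positivity
  have hn1 : ((n : ℝ) + 1) ≠ 0 := by positivity
  field_simp
  nlinarith [E1', E2']
end

section
/- Let M be a symmetric positive-definite p×p matrix whose eigenvalues all lie in [α, β] with 0 < α < β. Then det(M) ≥ α^κ · β^{p-κ}, where κ = (β·p − tr(M))/(β − α). -/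
/-- Kalantari–Pate determinantal lower bound: Let `M` be a symmetric
positive-definite `p × p` real matrix whose eigenvalues all lie in `[α, β]` with
`0 < α < β`. Then `det M ≥ α^κ · β^(p-κ)` where `κ = (β·p − tr M)/(β − α)`. -/
theorem stmt_12 (p : ℕ) (α β : ℝ) (hα : 0 < α) (hαβ : α < β)
    (M : Matrix (Fin p) (Fin p) ℝ) (hM : M.IsHermitian) (hpd : M.PosDef)
    (heig : ∀ i, α ≤ hM.eigenvalues i ∧ hM.eigenvalues i ≤ β) :
    α ^ ((β * p - M.trace) / (β - α)) *
        β ^ ((p : ℝ) - (β * p - M.trace) / (β - α)) ≤ M.det := by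
  have hβ : 0 < β := hα.trans hαβ
  have hd : 0 < β - α := sub_pos.mpr hαβ
  set lam := hM.eigenvalues with hlam
  have htr : M.trace = ∑ i, lam i := by
    conv_lhs => rw [hM.spectral_theorem]
    rw [Unitary.conjStarAlgAut_apply, Matrix.trace_mul_cycle, Unitary.coe_star_mul_self, one_mul]
    simp [Matrix.trace_diagonal, hlam]
  have hdet : M.det = ∏ i, lam i := by
    have := hM.det_eq_prod_eigenvalues
    simpa using this
  set w : Fin p → ℝ := fun i => (β - lam i) / (β - α) with hw
  set v : Fin p → ℝ := fun i => (lam i - α) / (β - α) with hv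
  have hwv : ∀ i, w i + v i = 1 := by
    intro i; simp only [hw, hv]; field_simp; ring
  have hw0 : ∀ i, 0 ≤ w i := fun i =>
    div_nonneg (sub_nonneg.mpr (heig i).2) hd.le
  have hv0 : ∀ i, 0 ≤ v i := fun i =>
    div_nonneg (sub_nonneg.mpr (heig i).1) hd.le
  have key : ∀ i, α ^ w i * β ^ v i ≤ lam i := by
    intro i
    have h := Real.geom_mean_le_arith_mean2_weighted (hw0 i) (hv0 i) hα.le hβ.le (hwv i)
    calc α ^ w i * β ^ v i ≤ w i * α + v i * β := h
      _ = lam i := by simp only [hw, hv]; field_simp; ring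
  have hsum_w : ∑ i, w i = (β * p - M.trace) / (β - α) := by
    simp only [hw, ← Finset.sum_div, htr]
    congr 1
    rw [Finset.sum_sub_distrib]
    simp [mul_comm]
  have hsum_v : ∑ i, v i = (p : ℝ) - (β * p - M.trace) / (β - α) := by
    have : ∑ i, v i = ∑ i, (1 - w i) := by
      refine Finset.sum_congr rfl fun i _ => ?_
      linarith [hwv i]
    rw [this, Finset.sum_sub_distrib, hsum_w]
    simp
  have hprod : ∏ i, (α ^ w i * β ^ v i) ≤ ∏ i, lam i := by
    refine Finset.prod_le_prod (fun i _ => ?_) (fun i _ => key i)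
    positivity
  have hsplit : ∏ i, (α ^ w i * β ^ v i)
      = α ^ (∑ i, w i) * β ^ (∑ i, v i) := by
    rw [Finset.prod_mul_distrib, ← Real.rpow_sum_of_pos hα, ← Real.rpow_sum_of_pos hβ]
  rw [hsum_w, hsum_v] at hsplit
  rw [hdet, ← hsplit]
  exact hprod
end
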